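/- Suppose u : M × [t₀ - δ, t₀] → ℝ is given by u(x,t) = ∫_M G(x,t;y,t₀) w(y) dμ(y), where 0 ≤ w ≤ A, w is supported in a ball B(x₀, ρ), and G satisfies the upper bound G(x,t;y,t₀) ≤ C₁ (t₀-t)^{-n/2} exp(-c₂ d(x,y)²/(t₀-t)). Then there exist constants C₃, C₄ > 0 (depending on A, ρ, C₁, c₂, n, δ, and μ(B(x₀,ρ))) such that u(x,t) ≤ C₃ exp(-C₄ d(x,x₀)²) for all x with d(x,x₀) ≥ 2ρ and all t ∈ [t₀-δ, t₀). -/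

import Mathlib

open Real Metric MeasureTheory Set Function

private lemma rpow_mul_exp_le_aux (n : ℕ) (b : ℝ) (hb : 0 < b) (s : ℝ) (hs : 0 < s) :
    s ^ (-((n : ℝ) / 2)) * Real.exp (-b / s) ≤ 1 + n.factorial / b ^ n := by
  set r : ℝ := s⁻¹ with hr
  have hr0 : 0 < r := by positivity
  have hfb : (0:ℝ) ≤ n.factorial / b ^ n :=
    div_nonneg (by positivity) (pow_nonneg hb.le n)
  have h1 : s ^ (-((n : ℝ) / 2)) = r ^ ((n : ℝ) / 2) := by
    rw [Real.rpow_neg hs.le, hr, Real.inv_rpow hs.le]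
  have h2 : Real.exp (-b / s) = Real.exp (-(b * r)) := by
    rw [hr]; ring_nf
  rw [h1, h2]
  rcases le_total r 1 with h | h
  · have e1 : r ^ ((n : ℝ) / 2) ≤ 1 := Real.rpow_le_one hr0.le h (by positivity)
    have e2 : Real.exp (-(b * r)) ≤ 1 := Real.exp_le_one_iff.mpr (by nlinarith)
    have : r ^ ((n : ℝ) / 2) * Real.exp (-(b * r)) ≤ 1 :=
      mul_le_one₀ e1 (Real.exp_pos _).le e2
    linarith
  · have e1 : r ^ ((n : ℝ) / 2) ≤ r ^ (n : ℝ) :=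
      Real.rpow_le_rpow_of_exponent_le h (by
        have : (0:ℝ) ≤ (n : ℝ) := by positivity
        linarith)
    have e1' : r ^ ((n : ℝ) / 2) ≤ r ^ n := by
      rwa [Real.rpow_natCast] at e1
    have e3 : (b * r) ^ n / n.factorial ≤ Real.exp (b * r) :=
      Real.pow_div_factorial_le_exp (x := b * r) (by positivity) n
    have e4 : r ^ n * Real.exp (-(b * r)) ≤ n.factorial / b ^ n := by
      have hexp : (0:ℝ) < Real.exp (b * r) := Real.exp_pos _
      have hbn : (0:ℝ) < b ^ n := by positivity
      have hfact : (0:ℝ) < n.factorial := by positivity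
      rw [mul_pow, div_le_iff₀ hfact] at e3
      rw [Real.exp_neg, mul_inv_le_iff₀ hexp, div_mul_eq_mul_div, le_div_iff₀ hbn]
      nlinarith
    calc r ^ ((n : ℝ) / 2) * Real.exp (-(b * r))
        ≤ r ^ n * Real.exp (-(b * r)) :=
          mul_le_mul_of_nonneg_right e1' (Real.exp_pos _).le
      _ ≤ n.factorial / b ^ n := e4
      _ ≤ 1 + n.factorial / b ^ n := by linarith

set_option maxHeartbeats 1000000 in
/-- Upper heat-kernel bound implies quadratic exponential spatial decay of
`u(x,t) = ∫ G(x,t;y,t₀) w(y) dμ(y)` for bounded `w` supported in a ball `B(x₀,ρ)`,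
in the region `d(x,x₀) ≥ 2ρ`. -/
theorem conjugate_heat_solution_gaussian_decay {M : Type*} [MeasurableSpace M]
    [MetricSpace M] (μ : Measure M) (n : ℕ)
    (t₀ δ C₁ c₂ A ρ : ℝ) (hδ : 0 < δ) (hC₁ : 0 < C₁) (hc₂ : 0 < c₂)
    (hA : 0 ≤ A) (hρ : 0 < ρ)
    (G : M → ℝ → M → ℝ) (w : M → ℝ) (u : M → ℝ → ℝ) (x₀ : M)
    (hu : ∀ x t, u x t = ∫ y, G x t y * w y ∂μ)
    (hw0 : ∀ y, 0 ≤ w y) (hwA : ∀ y, w y ≤ A)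
    (hsupp : Function.support w ⊆ Metric.ball x₀ ρ)
    (hμB : μ (Metric.ball x₀ ρ) < ⊤)
    (hGup : ∀ x t y, t ∈ Set.Ico (t₀ - δ) t₀ →
      G x t y ≤ C₁ * (t₀ - t) ^ (-((n : ℝ) / 2)) *
        Real.exp (-c₂ * dist x y ^ 2 / (t₀ - t))) :
    ∃ C₃ > (0:ℝ), ∃ C₄ > (0:ℝ), ∀ x t, 2 * ρ ≤ dist x x₀ →
      t ∈ Set.Ico (t₀ - δ) t₀ →
      u x t ≤ C₃ * Real.exp (-C₄ * dist x x₀ ^ 2) := by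
  have hb : (0:ℝ) < c₂ * ρ ^ 2 / 2 := by positivity
  set b : ℝ := c₂ * ρ ^ 2 / 2 with hbdef
  clear_value b
  have hK : (0:ℝ) < 1 + n.factorial / b ^ n := by
    have : (0:ℝ) ≤ (n.factorial : ℝ) / b ^ n :=
      div_nonneg (by positivity) (pow_nonneg hb.le n)
    linarith
  set K : ℝ := 1 + n.factorial / b ^ n with hKdef
  set V : ℝ := (μ (Metric.ball x₀ ρ)).toReal with hVdef
  have hV : 0 ≤ V := ENNReal.toReal_nonneg
  clear_value K
  clear_value V
  have hC₃ : (0:ℝ) < C₁ * K * A * V + 1 := by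
    nlinarith [mul_nonneg (mul_nonneg (mul_pos hC₁ hK).le hA) hV]
  refine ⟨C₁ * K * A * V + 1, hC₃, c₂ / (8 * δ), by positivity, ?_⟩
  intro x t hx ht
  obtain ⟨ht1, ht2⟩ := ht
  set s : ℝ := t₀ - t with hsdef
  have hs0 : 0 < s := by simp only [hsdef]; linarith
  have hsδ : s ≤ δ := by simp only [hsdef]; linarith
  set d : ℝ := dist x x₀ with hddef
  have hd0 : 0 < d := lt_of_lt_of_le (by linarith) hx
  clear_value s
  clear_value d
  set E : ℝ := Real.exp (-(c₂ / (8 * δ)) * d ^ 2) with hEdef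
  have hE : 0 < E := Real.exp_pos _
  clear_value E
  set S : Set M := toMeasurable μ (Metric.ball x₀ ρ) with hSdef
  have hSm : MeasurableSet S := measurableSet_toMeasurable μ _
  have hSsub : Metric.ball x₀ ρ ⊆ S := subset_toMeasurable μ _
  have hSμ : μ S = μ (Metric.ball x₀ ρ) := measure_toMeasurable _
  clear_value S
  set g : M → ℝ := S.indicator (fun _ => C₁ * K * A * E) with hgdef
  clear_value g
  have hcnn : 0 ≤ C₁ * K * A * E := by
    have := (mul_pos (mul_pos hC₁ hK) hE)
    nlinarith
  have hgnn : ∀ y, 0 ≤ g y := by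
    intro y
    rw [hgdef]
    exact Set.indicator_nonneg (fun _ _ => by nlinarith) y
  have hle : ∀ y, G x t y * w y ≤ g y := by
    intro y
    by_cases hy : w y = 0
    · rw [hy, mul_zero]; exact hgnn y
    · have hyball : y ∈ Metric.ball x₀ ρ := hsupp hy
      have hdy : d / 2 ≤ dist x y := by
        have h1 : dist y x₀ < ρ := by rwa [Metric.mem_ball] at hyball
        have h2 : d ≤ dist x y + dist y x₀ := hddef ▸ dist_triangle x y x₀
        linarith
      have hGb := hGup x t y ⟨ht1, ht2⟩
      rw [← hsdef] at hGb
      have hdy2 : d ^ 2 / 4 ≤ dist x y ^ 2 := by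
        nlinarith [dist_nonneg (x := x) (y := y)]
      have hρd : 4 * ρ ^ 2 ≤ d ^ 2 := by nlinarith
      have hexp : Real.exp (-c₂ * dist x y ^ 2 / s) ≤ Real.exp (-b / s) * E := by
        rw [hEdef, ← Real.exp_add]
        apply Real.exp_le_exp.mpr
        have key1 : -c₂ * dist x y ^ 2 / s ≤ -(c₂ / 4) * d ^ 2 / s := by
          rw [div_le_div_iff_of_pos_right hs0]
          linarith [mul_le_mul_of_nonneg_left hdy2 hc₂.le]
        have e1 : -(c₂ / 8) * d ^ 2 / s ≤ -b / s := by
          rw [div_le_div_iff_of_pos_right hs0, hbdef]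
          linarith [mul_le_mul_of_nonneg_left hρd (by positivity : (0:ℝ) ≤ c₂ / 8)]
        have h8 : c₂ / (8 * δ) * s ≤ c₂ / 8 := by
          rw [div_mul_eq_mul_div, div_le_div_iff₀ (by positivity) (by norm_num : (0:ℝ) < 8)]
          linarith [mul_le_mul_of_nonneg_left hsδ hc₂.le]
        have e2 : -(c₂ / 8) * d ^ 2 / s ≤ -(c₂ / (8 * δ)) * d ^ 2 := by
          rw [div_le_iff₀ hs0]
          linarith [mul_le_mul_of_nonneg_right h8 (sq_nonneg d)]
        have hsplit : -(c₂ / 4) * d ^ 2 / s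
            = -(c₂ / 8) * d ^ 2 / s + -(c₂ / 8) * d ^ 2 / s := by ring
        linarith
      have hrK : s ^ (-((n : ℝ) / 2)) * Real.exp (-b / s) ≤ K := by
        rw [hKdef]; exact rpow_mul_exp_le_aux n b hb s hs0
      have hG2 : G x t y ≤ C₁ * K * E := by
        have hrp : (0:ℝ) ≤ s ^ (-((n : ℝ) / 2)) := Real.rpow_nonneg hs0.le _
        calc G x t y ≤ C₁ * s ^ (-((n : ℝ) / 2)) * Real.exp (-c₂ * dist x y ^ 2 / s) := hGb
          _ ≤ C₁ * s ^ (-((n : ℝ) / 2)) * (Real.exp (-b / s) * E) := by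
              apply mul_le_mul_of_nonneg_left hexp
              positivity
          _ = C₁ * (s ^ (-((n : ℝ) / 2)) * Real.exp (-b / s)) * E := by ring
          _ ≤ C₁ * K * E :=
              mul_le_mul_of_nonneg_right
                (mul_le_mul_of_nonneg_left hrK hC₁.le) hE.le
      have hw' : 0 ≤ w y := hw0 y
      have hwA' : w y ≤ A := hwA y
      have hCKE : 0 ≤ C₁ * K * E := by positivity
      calc G x t y * w y ≤ C₁ * K * E * w y :=
            mul_le_mul_of_nonneg_right hG2 hw'
        _ ≤ C₁ * K * E * A := mul_le_mul_of_nonneg_left hwA' hCKE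
        _ = C₁ * K * A * E := by ring
        _ = g y := by rw [hgdef, Set.indicator_of_mem (hSsub hyball)]
  have hgint : Integrable g μ := by
    rw [hgdef]
    apply (integrable_indicator_iff hSm).mpr
    exact (integrableOn_const_iff).mpr (Or.inr (by rw [hSμ]; exact hμB))
  have hgI : ∫ y, g y ∂μ = C₁ * K * A * E * V := by
    rw [hgdef, MeasureTheory.integral_indicator hSm,
      MeasureTheory.setIntegral_const, hVdef, smul_eq_mul, measureReal_def, hSμ]
    ring
  have hub : u x t ≤ ∫ y, g y ∂μ := by
    rw [hu]
    by_cases hf : Integrable (fun y => G x t y * w y) μ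
    · exact MeasureTheory.integral_mono hf hgint hle
    · rw [MeasureTheory.integral_undef hf]
      exact MeasureTheory.integral_nonneg hgnn
  calc u x t ≤ ∫ y, g y ∂μ := hub
    _ = C₁ * K * A * V * E := by rw [hgI]; ring
    _ ≤ (C₁ * K * A * V + 1) * E := by nlinarith
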